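/- Let 0 < H < 1/2 and 0 < s' < s < t' < t (interlaced intervals). Define R = (1/2)*((t-s')^(2H) + (t'-s)^(2H) - (t-t')^(2H) - (s-s')^(2H)). Then |R| ≤ 3 * (t-s)^(2H) * (t'-s')^(2H) / (t'-s)^(2H). -/
import Mathlib

lemma rpow_subadd (x y p : ℝ) (hx : 0 ≤ x) (hy : 0 ≤ y) (hp : 0 ≤ p) (hp1 : p ≤ 1) :
    (x + y) ^ p ≤ x ^ p + y ^ p := by
  have h := NNReal.rpow_add_le_add_rpow (x.toNNReal) (y.toNNReal) hp hp1
  have h2 := NNReal.coe_le_coe.2 h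
  rw [← Real.toNNReal_add hx hy] at h2
  simpa [NNReal.coe_rpow, Real.coe_toNNReal _ hx, Real.coe_toNNReal _ hy,
    Real.coe_toNNReal _ (add_nonneg hx hy)] using h2

theorem stmt9 (H : ℝ) (hH0 : 0 < H) (hH1 : H < 1/2)
    (s' s t' t : ℝ) (h1 : 0 < s') (h2 : s' < s) (h3 : s < t') (h4 : t' < t) :
    |(1/2) * ((t - s') ^ (2*H) + (t' - s) ^ (2*H) - (t - t') ^ (2*H) - (s - s') ^ (2*H))|
      ≤ 3 * (t - s) ^ (2*H) * (t' - s') ^ (2*H) / (t' - s) ^ (2*H) := by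
  set α := 2*H with hα
  have hα0 : 0 ≤ α := by positivity
  have hα1 : α ≤ 1 := by rw [hα]; linarith
  have ha : (0:ℝ) < s - s' := by linarith
  have hb : (0:ℝ) < t' - s := by linarith
  have hc : (0:ℝ) < t - t' := by linarith
  set A := (s - s') ^ α with hA
  set B := (t' - s) ^ α with hB
  set C := (t - t') ^ α with hC
  set S := (t - s') ^ α with hSdef
  set P := (t - s) ^ α with hP
  set Q := (t' - s') ^ α with hQ
  have hBpos : 0 < B := Real.rpow_pos_of_pos hb α
  have hApos : 0 < A := Real.rpow_pos_of_pos ha α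
  have hCpos : 0 < C := Real.rpow_pos_of_pos hc α
  have hSpos : 0 < S := Real.rpow_pos_of_pos (by linarith) α
  -- subadditivity: S ≤ A + B + C
  have hsub1 : S ≤ A + ((t' - s) + (t - t')) ^ α := by
    have := rpow_subadd (s - s') ((t' - s) + (t - t')) α ha.le (by linarith) hα0 hα1
    have e : (s - s') + ((t' - s) + (t - t')) = t - s' := by ring
    rw [e] at this
    exact this
  have hsub2 : ((t' - s) + (t - t')) ^ α ≤ B + C :=
    rpow_subadd (t' - s) (t - t') α hb.le hc.le hα0 hα1
  have hS : S ≤ A + B + C := by linarith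
  -- monotonicity
  have hBP : B ≤ P := Real.rpow_le_rpow hb.le (by linarith) hα0
  have hBQ : B ≤ Q := Real.rpow_le_rpow hb.le (by linarith) hα0
  have hAQ : A ≤ Q := Real.rpow_le_rpow ha.le (by linarith) hα0
  have hCP : C ≤ P := Real.rpow_le_rpow hc.le (by linarith) hα0
  set X := P * Q / B with hX
  have hXB : X * B = P * Q := div_mul_cancel₀ _ hBpos.ne'
  have hXpos : 0 < X := by
    have hPpos : 0 < P := lt_of_lt_of_le hBpos hBP
    have hQpos : 0 < Q := lt_of_lt_of_le hBpos hBQ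
    positivity
  have habs : |(1/2) * (S + B - C - A)| ≤ X := by
    rw [abs_le]
    constructor
    · nlinarith [mul_le_mul hAQ hBP hBpos.le (le_of_lt (lt_of_lt_of_le hBpos hBQ)),
        mul_le_mul hCP hBQ hBpos.le (le_of_lt (lt_of_lt_of_le hBpos hBP))]
    · nlinarith [mul_le_mul hBQ hBP hBpos.le (le_of_lt (lt_of_lt_of_le hBpos hBQ))]
  have h3X : X ≤ 3 * P * Q / B := by
    rw [hX]; rw [div_le_div_iff₀ hBpos hBpos]
    nlinarith [mul_pos (lt_of_lt_of_le hBpos hBP) (lt_of_lt_of_le hBpos hBQ)]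
  linarith
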